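/- If the sequence n ↦ P(DLG_6, n)/C(n,6) converges to a limit L as n → ∞, then L ≥ 10/81. -/

import Mathlib

open Classical in
/-- Number of `k`-element vertex subsets of `G` whose induced subgraph is isomorphic to `H`,
where `k` is the number of vertices of `H`. -/
noncomputable def inducedCount {α β : Type*} [Fintype α] [Fintype β]
    (H : SimpleGraph α) (G : SimpleGraph β) : ℕ :=
  (Finset.univ.filter fun S : Finset β =>
    S.card = Fintype.card α ∧ Nonempty ((G.induce (S : Set β)) ≃g H)).card

/-- The maximum of `inducedCount H G` over all graphs `G` on `n` vertices. -/
noncomputable def maxInducedCount {α : Type*} [Fintype α] (H : SimpleGraph α) (n : ℕ) : ℕ :=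
  sSup {m | ∃ G : SimpleGraph (Fin n), inducedCount H G = m}

/-- The double loop graph `DLG(1,2)` on `ZMod k`: distinct `i, j` are adjacent iff
`i - j ≡ ±1` or `±2 (mod k)`. -/
def DLG (k : ℕ) : SimpleGraph (ZMod k) where
  Adj i j := i ≠ j ∧ (i - j = 1 ∨ i - j = -1 ∨ i - j = 2 ∨ i - j = -2)
  symm := by
    constructor
    rintro i j ⟨hne, h⟩
    refine ⟨hne.symm, ?_⟩
    have hji : j - i = -(i - j) := by ring
    rcases h with h | h | h | h <;> rw [hji, h] <;> simp
  loopless := ⟨fun i ⟨h, _⟩ => h rfl⟩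

/-- tripartite graph on `Fin n` by residue mod 3 -/
def Gm (n : ℕ) : SimpleGraph (Fin n) where
  Adj u v := u.val % 3 ≠ v.val % 3
  symm := ⟨fun _ _ h => Ne.symm h⟩
  loopless := ⟨fun _ h => h rfl⟩

def zEquiv : ZMod 6 ≃ Fin 6 where
  toFun i := ⟨i.val, i.val_lt⟩
  invFun j := (j.val : ZMod 6)
  left_inv := by decide
  right_inv := by decide

instance dlgDec (k : ℕ) : DecidableRel (DLG k).Adj := fun a b =>
  decidable_of_iff (a ≠ b ∧ (a - b = 1 ∨ a - b = -1 ∨ a - b = 2 ∨ a - b = -2)) Iff.rfl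

lemma key_iso (n : ℕ) (w : Fin 6 → Fin n) (hinj : Function.Injective w)
    (hc : ∀ i : Fin 6, (w i).val % 3 = i.val % 3) (s : Set (Fin n)) (hs : s = Set.range w) :
    Nonempty (((Gm n).induce s) ≃g DLG 6) := by
  subst hs
  refine ⟨SimpleGraph.Iso.symm ⟨zEquiv.trans (Equiv.ofInjective w hinj), ?_⟩⟩
  intro a b
  show (Gm n).Adj (w (zEquiv a)) (w (zEquiv b)) ↔ (DLG 6).Adj a b
  show ((w (zEquiv a)).val % 3 ≠ (w (zEquiv b)).val % 3) ↔ (DLG 6).Adj a b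
  rw [hc, hc]
  exact (by decide : ∀ a b : ZMod 6,
    ((zEquiv a).val % 3 ≠ (zEquiv b).val % 3) ↔ (DLG 6).Adj a b) a b

def emb (m : ℕ) (c : Fin 3) (x : Fin m) : Fin (3*m) :=
  ⟨3*x.val + c.val, by have := x.isLt; have := c.isLt; omega⟩

lemma embval (m : ℕ) (c : Fin 3) (x : Fin m) : (emb m c x).val = 3*x.val + c.val := rfl

lemma embeq (m : ℕ) (c c' : Fin 3) (x y : Fin m) :
    emb m c x = emb m c' y ↔ (c = c' ∧ x = y) := by
  constructor
  · intro he
    have hv := congrArg Fin.val he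
    simp only [embval] at hv
    have h1 := c.isLt; have h2 := c'.isLt
    exact ⟨Fin.ext (by omega), Fin.ext (by omega)⟩
  · rintro ⟨rfl, rfl⟩; rfl

def w6 {γ : Type*} (v0 v1 v2 v3 v4 v5 : γ) : Fin 6 → γ := fun i =>
  match i with
  | ⟨0,_⟩ => v0 | ⟨1,_⟩ => v1 | ⟨2,_⟩ => v2 | ⟨3,_⟩ => v3 | ⟨4,_⟩ => v4 | ⟨5,_⟩ => v5

@[simp] lemma w6_0 {γ : Type*} (v0 v1 v2 v3 v4 v5 : γ) : w6 v0 v1 v2 v3 v4 v5 0 = v0 := rfl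
@[simp] lemma w6_1 {γ : Type*} (v0 v1 v2 v3 v4 v5 : γ) : w6 v0 v1 v2 v3 v4 v5 1 = v1 := rfl
@[simp] lemma w6_2 {γ : Type*} (v0 v1 v2 v3 v4 v5 : γ) : w6 v0 v1 v2 v3 v4 v5 2 = v2 := rfl
@[simp] lemma w6_3 {γ : Type*} (v0 v1 v2 v3 v4 v5 : γ) : w6 v0 v1 v2 v3 v4 v5 3 = v3 := rfl
@[simp] lemma w6_4 {γ : Type*} (v0 v1 v2 v3 v4 v5 : γ) : w6 v0 v1 v2 v3 v4 v5 4 = v4 := rfl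
@[simp] lemma w6_5 {γ : Type*} (v0 v1 v2 v3 v4 v5 : γ) : w6 v0 v1 v2 v3 v4 v5 5 = v5 := rfl

lemma w_image {γ : Type*} [DecidableEq γ] (w : Fin 6 → γ) :
    Finset.image w Finset.univ = {w 0, w 1, w 2, w 3, w 4, w 5} := by
  ext x
  simp [Finset.mem_image, Fin.exists_fin_succ, eq_comm]

lemma count_lb (m : ℕ) : (m.choose 2)^3 ≤ inducedCount (DLG 6) (Gm (3*m)) := by
  classical
  set F : Finset (Fin m) × Finset (Fin m) × Finset (Fin m) → Finset (Fin (3*m)) :=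
    fun p => p.1.image (emb m 0) ∪ p.2.1.image (emb m 1) ∪ p.2.2.image (emb m 2) with hF
  set D : Finset (Finset (Fin m) × Finset (Fin m) × Finset (Fin m)) :=
    Finset.powersetCard 2 Finset.univ ×ˢ
      (Finset.powersetCard 2 Finset.univ ×ˢ Finset.powersetCard 2 Finset.univ) with hD
  have hDcard : D.card = (m.choose 2)^3 := by
    simp [hD, Finset.card_powersetCard]
    ring
  have hrec : ∀ (c : Fin 3) (p : Finset (Fin m) × Finset (Fin m) × Finset (Fin m)) (a : Fin m),
      emb m c a ∈ F p ↔ (0 = c ∧ a ∈ p.1) ∨ (1 = c ∧ a ∈ p.2.1) ∨ (2 = c ∧ a ∈ p.2.2) := by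
    intro c p a
    simp only [hF, Finset.mem_union, Finset.mem_image, embeq]
    constructor
    · rintro ((⟨x, hx, rfl, rfl⟩ | ⟨x, hx, rfl, rfl⟩) | ⟨x, hx, rfl, rfl⟩)
      exacts [Or.inl ⟨rfl, hx⟩, Or.inr (Or.inl ⟨rfl, hx⟩), Or.inr (Or.inr ⟨rfl, hx⟩)]
    · rintro (⟨rfl, ha⟩ | ⟨rfl, ha⟩ | ⟨rfl, ha⟩)
      exacts [Or.inl (Or.inl ⟨a, ha, rfl, rfl⟩), Or.inl (Or.inr ⟨a, ha, rfl, rfl⟩),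
        Or.inr ⟨a, ha, rfl, rfl⟩]
  have hinj : Function.Injective F := by
    intro p q hpq
    have key : ∀ (c : Fin 3) (a : Fin m), (emb m c a ∈ F p) ↔ (emb m c a ∈ F q) := by
      intro c a; rw [hpq]
    have h0 : p.1 = q.1 := by
      ext a; have := key 0 a; rw [hrec, hrec] at this; simpa using this
    have h1 : p.2.1 = q.2.1 := by
      ext a; have := key 1 a; rw [hrec, hrec] at this; simpa using this
    have h2 : p.2.2 = q.2.2 := by
      ext a; have := key 2 a; rw [hrec, hrec] at this; simpa using this
    exact Prod.ext h0 (Prod.ext h1 h2)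
  rw [inducedCount, ← hDcard]
  apply Finset.card_le_card_of_injOn F _ (fun x _ y _ h => hinj h)
  -- maps to
  intro p hp
  simp only [hD, Finset.mem_coe, Finset.mem_product, Finset.mem_powersetCard] at hp
  obtain ⟨⟨-, hA⟩, ⟨-, hB⟩, ⟨-, hC⟩⟩ := hp
  obtain ⟨a1, a2, ha, hAe⟩ := Finset.card_eq_two.mp hA
  obtain ⟨b1, b2, hb, hBe⟩ := Finset.card_eq_two.mp hB
  obtain ⟨c1, c2, hc, hCe⟩ := Finset.card_eq_two.mp hC
  set w : Fin 6 → Fin (3*m) :=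
    w6 (emb m 0 a1) (emb m 1 b1) (emb m 2 c1) (emb m 0 a2) (emb m 1 b2) (emb m 2 c2) with hw
  have hwc : ∀ i : Fin 6, (w i).val % 3 = i.val % 3 := by
    intro i
    fin_cases i <;> simp [hw, embval] <;> omega
  have hwinj : Function.Injective w := by
    intro i j hij
    by_contra hne
    have hmod : i.val % 3 = j.val % 3 := by rw [← hwc i, ← hwc j, hij]
    have key6 : ∀ i j : Fin 6, i ≠ j → i.val % 3 = j.val % 3 →
        (i = 0 ∧ j = 3) ∨ (i = 3 ∧ j = 0) ∨ (i = 1 ∧ j = 4) ∨ (i = 4 ∧ j = 1) ∨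
        (i = 2 ∧ j = 5) ∨ (i = 5 ∧ j = 2) := by decide
    rcases key6 i j hne hmod with ⟨rfl, rfl⟩|⟨rfl, rfl⟩|⟨rfl, rfl⟩|⟨rfl, rfl⟩|⟨rfl, rfl⟩|⟨rfl, rfl⟩ <;>
      simp only [hw, w6_0, w6_1, w6_2, w6_3, w6_4, w6_5, embeq] at hij <;>
      simp_all
  have hfeq : F p = Finset.image w Finset.univ := by
    rw [w_image]
    simp only [hw, w6_0, w6_1, w6_2, w6_3, w6_4, w6_5]
    simp only [hF, hAe, hBe, hCe, Finset.image_insert, Finset.image_singleton]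
    ext x
    simp only [Finset.mem_union, Finset.mem_insert, Finset.mem_singleton]
    tauto
  refine Finset.mem_filter.mpr ⟨Finset.mem_univ _, ?_, ?_⟩
  · rw [hfeq, Finset.card_image_of_injective _ hwinj]
    simp
  · apply key_iso (3*m) w hwinj hwc
    rw [hfeq]
    simp

open Filter Nat

lemma desc6 (k : ℕ) : 720 * (3*k+6).choose 6 = (3*k+1)*(3*k+2)*(3*k+3)*(3*k+4)*(3*k+5)*(3*k+6) := by
  have h := Nat.descFactorial_eq_factorial_mul_choose (3*k+6) 6
  have h2 : Nat.factorial 6 = 720 := by decide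
  rw [h2] at h
  rw [← h]
  simp only [Nat.descFactorial_succ, Nat.descFactorial_zero, mul_one, Nat.sub_zero]
  have e1 : 3*k+6-1 = 3*k+5 := by omega
  have e2 : 3*k+6-2 = 3*k+4 := by omega
  have e3 : 3*k+6-3 = 3*k+3 := by omega
  have e4 : 3*k+6-4 = 3*k+2 := by omega
  have e5 : 3*k+6-5 = 3*k+1 := by omega
  rw [e1,e2,e3,e4,e5]
  ring

lemma inv_nat_tendsto : Tendsto (fun m : ℕ => ((m:ℝ))⁻¹) atTop (nhds 0) :=
  tendsto_inv_atTop_zero.comp tendsto_natCast_atTop_atTop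

lemma const_div_tendsto (a : ℝ) : Tendsto (fun m : ℕ => a / (m:ℝ)) atTop (nhds 0) := by
  simpa [div_eq_mul_inv] using inv_nat_tendsto.const_mul a

lemma factor_tendsto (a b : ℝ) :
    Tendsto (fun m : ℕ => ((m:ℝ) - a)/(3*(m:ℝ) - b)) atTop (nhds (1/3)) := by
  have h1 : Tendsto (fun m : ℕ => (1 - a/(m:ℝ))/(3 - b/(m:ℝ))) atTop (nhds (1/3)) := by
    have hnum : Tendsto (fun m : ℕ => 1 - a/(m:ℝ)) atTop (nhds 1) := by
      simpa using (const_div_tendsto a).const_sub 1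
    have hden : Tendsto (fun m : ℕ => 3 - b/(m:ℝ)) atTop (nhds 3) := by
      simpa using (const_div_tendsto b).const_sub 3
    simpa [Pi.div_def] using hnum.div hden (by norm_num)
  apply h1.congr'
  have hb : ∀ᶠ m : ℕ in atTop, b < 3 * (m:ℝ) := by
    have : Tendsto (fun m : ℕ => 3*(m:ℝ)) atTop atTop :=
      tendsto_natCast_atTop_atTop.const_mul_atTop (by norm_num)
    exact this.eventually_gt_atTop b
  filter_upwards [hb, eventually_ge_atTop 1] with m hm hm1
  have hm0 : (m:ℝ) ≠ 0 := by positivity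
  have hden : 3*(m:ℝ) - b ≠ 0 := by linarith
  field_simp

lemma ratio_tendsto :
    Tendsto (fun m : ℕ => ((m.choose 2 : ℝ))^3 / (((3*m).choose 6 : ℝ))) atTop
      (nhds (10/81)) := by
  have g : Tendsto (fun m : ℕ =>
      90 * ((((m:ℝ) - 0)/(3*(m:ℝ) - 0)) * (((m:ℝ) - 0)/(3*(m:ℝ) - 1)) *
        (((m:ℝ) - 0)/(3*(m:ℝ) - 2)) * (((m:ℝ) - 1)/(3*(m:ℝ) - 3)) *
        (((m:ℝ) - 1)/(3*(m:ℝ) - 4)) * (((m:ℝ) - 1)/(3*(m:ℝ) - 5)))) atTop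
      (nhds (90 * ((1/3) * (1/3) * (1/3) * (1/3) * (1/3) * (1/3)))) := by
    exact (((((((factor_tendsto 0 0).mul (factor_tendsto 0 1)).mul
      (factor_tendsto 0 2)).mul (factor_tendsto 1 3)).mul
      (factor_tendsto 1 4)).mul (factor_tendsto 1 5)).const_mul 90)
  have hval : (90 : ℝ) * ((1/3) * (1/3) * (1/3) * (1/3) * (1/3) * (1/3)) = 10/81 := by norm_num
  rw [hval] at g
  apply g.congr'
  filter_upwards [eventually_ge_atTop 2] with m hm
  obtain ⟨k, rfl⟩ : ∃ k, m = k + 2 := ⟨m - 2, by omega⟩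
  have hd := desc6 k
  set x : ℝ := ((k:ℝ) + 2) with hx
  have hxm : ((k+2 : ℕ) : ℝ) = x := by push_cast; ring
  have hc2 : (((k+2).choose 2 : ℕ) : ℝ) = x*(x-1)/2 := by
    rw [Nat.cast_choose_two, hxm]
  have hc6 : (((3*(k+2)).choose 6 : ℕ) : ℝ)
      = (3*x)*(3*x-1)*(3*x-2)*(3*x-3)*(3*x-4)*(3*x-5)/720 := by
    have h3 : 3*(k+2) = 3*k+6 := by ring
    rw [h3]
    have : ((720 * (3*k+6).choose 6 : ℕ) : ℝ)
        = (((3*k+1)*(3*k+2)*(3*k+3)*(3*k+4)*(3*k+5)*(3*k+6) : ℕ) : ℝ) := by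
      exact_mod_cast congrArg (fun n : ℕ => (n:ℝ)) hd
    push_cast at this
    rw [hx]
    linarith [this]
  rw [hc2, hc6, hxm]
  have h1 : (3*x) ≠ 0 := by rw [hx]; positivity
  have hx2 : (2:ℝ) ≤ x := by rw [hx]; have : (0:ℝ) ≤ (k:ℝ) := Nat.cast_nonneg k; linarith
  have h2 : (3*x-1) ≠ 0 := by linarith
  have h3 : (3*x-2) ≠ 0 := by linarith
  have h4 : (3*x-3) ≠ 0 := by linarith
  have h5 : (3*x-4) ≠ 0 := by linarith
  have h6 : (3*x-5) ≠ 0 := by linarith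
  field_simp
  ring

/-- If `P(DLG_6, n)/C(n,6)` converges to `L` as `n → ∞`, then `L ≥ 10/81`. -/
theorem dlg6_inducibility_lower (L : ℝ)
    (h : Filter.Tendsto (fun n : ℕ => (maxInducedCount (DLG 6) n : ℝ) / (n.choose 6 : ℝ))
      Filter.atTop (nhds L)) :
    10 / 81 ≤ L := by
  have h3 : Filter.Tendsto (fun m : ℕ => 3*m) Filter.atTop Filter.atTop :=
    Filter.tendsto_atTop_atTop_of_monotone (fun a b hab => by omega) (fun b => ⟨b, by omega⟩)
  have hsub : Filter.Tendsto
      (fun m : ℕ => (maxInducedCount (DLG 6) (3*m) : ℝ) / ((3*m).choose 6 : ℝ))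
      Filter.atTop (nhds L) := h.comp h3
  refine le_of_tendsto_of_tendsto ratio_tendsto hsub ?_
  filter_upwards [Filter.eventually_ge_atTop 2] with m hm
  have hden : (0:ℝ) < ((3*m).choose 6 : ℝ) := by
    exact_mod_cast Nat.choose_pos (by omega)
  have hnum : ((m.choose 2))^3 ≤ maxInducedCount (DLG 6) (3*m) := by
    refine le_trans (count_lb m) ?_
    refine le_csSup ?_ ⟨Gm (3*m), rfl⟩
    have he : {k | ∃ G : SimpleGraph (Fin (3*m)), inducedCount (DLG 6) G = k} =
        Set.range (fun G : SimpleGraph (Fin (3*m)) => inducedCount (DLG 6) G) := rfl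
    rw [he]
    exact (Set.finite_range _).bddAbove
  rw [div_le_div_iff_of_pos_right hden]
  exact_mod_cast hnum
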